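/- Let (X, 𝒜, μ) be a measure space and D ∈ 𝒜 with 0 < μ(D) < ∞. Let L > 0 and let v : X → ℝ be measurable with 0 ≤ v(x) ≤ L for all x ∈ D, and write v̄ = μ(D)^{-1} ∫_D v dμ. If μ({x ∈ D : v(x) = 0}) ≥ m for some m > 0, then L · μ({x ∈ D : v(x) = L}) ≤ (μ(D)/m) ∫_D |v − v̄| dμ. -/

import Mathlib

open MeasureTheory

/-- **Display (8.5)** (key inequality in the proof of Lemma 8.3). Let `(X,𝒜,μ)` be a
measure space, `D` measurable with `0 < μ(D) < ∞`, `L > 0`, and `v` measurable with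
`0 ≤ v ≤ L` on `D`; write `v̄ = μ(D)⁻¹ ∫_D v dμ`. If `μ({x ∈ D : v x = 0}) ≥ m` for
some `m > 0`, then `L · μ({x ∈ D : v x = L}) ≤ (μ(D)/m) ∫_D |v − v̄| dμ`. -/
theorem max_level_set_bound
    {X : Type*} [MeasurableSpace X] (μ : Measure X)
    (D : Set X) (hD : MeasurableSet D) (hD0 : 0 < μ D) (hDfin : μ D < ⊤)
    (L : ℝ) (hL : 0 < L) (v : X → ℝ) (hv : Measurable v)
    (hv0 : ∀ x ∈ D, 0 ≤ v x) (hvL : ∀ x ∈ D, v x ≤ L)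
    (m : ℝ) (hm : 0 < m) (hm' : ENNReal.ofReal m ≤ μ {x ∈ D | v x = 0}) :
    L * (μ {x ∈ D | v x = L}).toReal ≤
      ((μ D).toReal / m) *
        ∫ x in D, |v x - (μ D).toReal⁻¹ * ∫ y in D, v y ∂μ| ∂μ := by
  set A : ℝ := (μ D).toReal with hA
  have hA0 : 0 < A := ENNReal.toReal_pos hD0.ne' hDfin.ne
  set vb : ℝ := A⁻¹ * ∫ y in D, v y ∂μ with hvb
  -- integrability
  have hIntc : ∀ c : ℝ, IntegrableOn (fun _ => c) D μ := fun c =>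
    integrableOn_const hDfin.ne
  have hInt : IntegrableOn v D μ := by
    refine Integrable.mono' (hIntc L) hv.aestronglyMeasurable.restrict ?_
    filter_upwards [ae_restrict_mem hD] with x hx
    rw [Real.norm_eq_abs, abs_of_nonneg (hv0 x hx)]
    exact hvL x hx
  have hIntabs : IntegrableOn (fun x => |v x - vb|) D μ := (hInt.sub (hIntc vb)).abs
  -- bounds on vb
  have hint0 : 0 ≤ ∫ y in D, v y ∂μ := setIntegral_nonneg hD hv0
  have hvb0 : 0 ≤ vb := mul_nonneg (inv_nonneg.2 hA0.le) hint0
  have hvbL : vb ≤ L := by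
    have h1 : ∫ y in D, v y ∂μ ≤ ∫ _ in D, L ∂μ :=
      setIntegral_mono_on hInt (hIntc L) hD hvL
    rw [setIntegral_const] at h1
    rw [hvb, inv_mul_le_iff₀ hA0]
    simpa [smul_eq_mul, mul_comm, measureReal_def] using h1
  -- the sets
  set Z : Set X := {x ∈ D | v x = 0} with hZ
  set E : Set X := {x ∈ D | v x = L} with hE
  have hZm : MeasurableSet Z := hD.inter (hv (measurableSet_singleton 0))
  have hEm : MeasurableSet E := hD.inter (hv (measurableSet_singleton L))
  have hZD : Z ⊆ D := fun x hx => hx.1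
  have hED : E ⊆ D := fun x hx => hx.1
  have hdisj : Disjoint Z E := by
    rw [Set.disjoint_left]
    rintro x ⟨_, h0⟩ ⟨_, hLx⟩
    rw [h0] at hLx; exact hL.ne hLx
  have hZfin : μ Z < ⊤ := lt_of_le_of_lt (measure_mono hZD) hDfin
  have hEfin : μ E < ⊤ := lt_of_le_of_lt (measure_mono hED) hDfin
  set z : ℝ := (μ Z).toReal with hz
  set e : ℝ := (μ E).toReal with he
  have hmz : m ≤ z := by
    rw [hz, ← ENNReal.ofReal_le_iff_le_toReal hZfin.ne] ; exact hm'
  have heA : e ≤ A := ENNReal.toReal_mono hDfin.ne (measure_mono hED)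
  have hmA : m ≤ A := hmz.trans (ENNReal.toReal_mono hDfin.ne (measure_mono hZD))
  have he0 : 0 ≤ e := ENNReal.toReal_nonneg
  -- integral over Z
  have hIZ : ∫ x in Z, |v x - vb| ∂μ = z * vb := by
    rw [setIntegral_congr_fun hZm (g := fun _ => vb) (fun x hx => by
      simp [hx.2, abs_of_nonneg hvb0]), setIntegral_const, smul_eq_mul, measureReal_def]
  have hIE : ∫ x in E, |v x - vb| ∂μ = e * (L - vb) := by
    rw [setIntegral_congr_fun hEm (g := fun _ => L - vb) (fun x hx => by
      simp [hx.2, abs_of_nonneg (sub_nonneg.2 hvbL)]), setIntegral_const, smul_eq_mul, measureReal_def]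
  -- lower bound on the integral
  have hlow : z * vb + e * (L - vb) ≤ ∫ x in D, |v x - vb| ∂μ := by
    have hU : ∫ x in Z ∪ E, |v x - vb| ∂μ = z * vb + e * (L - vb) := by
      rw [setIntegral_union hdisj hEm (hIntabs.mono_set hZD) (hIntabs.mono_set hED),
        hIZ, hIE]
    rw [← hU]
    apply setIntegral_mono_set hIntabs
    · filter_upwards with x using abs_nonneg _
    · exact HasSubset.Subset.eventuallyLE (Set.union_subset hZD hED)
  -- finish
  rw [div_mul_eq_mul_div, le_div_iff₀ hm]
  have hI0 : 0 ≤ ∫ x in D, |v x - vb| ∂μ := setIntegral_nonneg hD fun x _ => abs_nonneg _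
  nlinarith [mul_le_mul_of_nonneg_left hlow hA0.le,
    mul_nonneg (mul_nonneg (sub_nonneg.2 heA) hm.le) hvb0,
    mul_nonneg (mul_nonneg (sub_nonneg.2 hmA) he0) (sub_nonneg.2 hvbL),
    mul_nonneg (mul_nonneg hA0.le (sub_nonneg.2 hmz)) hvb0]
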